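/- Let I ⊆ ℝ be an interval, let F̂ : I → M₃(ℂ) be differentiable and satisfy the local frame equations F̂′ = F̂·C with C = [[(1/3)·i·p, −i·q, m], [0, −(2/3)·i·p, q], [1, 0, (1/3)·i·p]] for real-valued functions m, p, q on I. Let θ : I → ℝ be differentiable with θ′ = −p, let 𝖩 = diag((1/3)·i, −(2/3)·i, (1/3)·i), and define F := F̂·exp(θ·𝖩) and z := exp(i·θ)·q. Then F satisfies the nonlocal frame equations F′ = F·[[0, −i·conj(z), m], [0, 0, z], [1, 0, 0]] (rows listed in order). -/

import Mathlib

open Complex Matrix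

noncomputable section

/-- The diagonal matrix `𝖩 = diag(i/3, −2i/3, i/3)`. -/
def matJ : Matrix (Fin 3) (Fin 3) ℂ :=
  Matrix.diagonal ![(1/3) * Complex.I, -(2/3) * Complex.I, (1/3) * Complex.I]

/-- The coefficient matrix of the local frame equations. -/
def localC (m p q : ℝ) : Matrix (Fin 3) (Fin 3) ℂ :=
  !![(1/3) * Complex.I * (p : ℂ), -Complex.I * (q : ℂ), (m : ℂ);
     0, -(2/3) * Complex.I * (p : ℂ), (q : ℂ);
     1, 0, (1/3) * Complex.I * (p : ℂ)]

/-- The coefficient matrix of the nonlocal (natural) frame equations. -/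
def naturalC (z : ℂ) (m : ℝ) : Matrix (Fin 3) (Fin 3) ℂ :=
  !![0, -Complex.I * (starRingEnd ℂ) z, (m : ℂ);
     0, 0, z;
     1, 0, 0]

/-- The diagonal entries of `𝖩`. -/
def dvec : Fin 3 → ℂ := ![(1/3) * Complex.I, -(2/3) * Complex.I, (1/3) * Complex.I]

/-- The matrix exponential `exp(t𝖩)` as an explicit diagonal matrix. -/
def Eof (t : ℝ) : Matrix (Fin 3) (Fin 3) ℂ :=
  Matrix.diagonal (fun k => Complex.exp ((t : ℂ) * dvec k))

lemma expJ (t : ℝ) : NormedSpace.exp ((t : ℂ) • matJ) = Eof t := by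
  rw [matJ, ← Matrix.diagonal_smul, Matrix.exp_diagonal, Eof]
  have hv : NormedSpace.exp ((t:ℂ) • ![(1/3) * Complex.I, -(2/3) * Complex.I, (1/3) * Complex.I])
      = fun k => Complex.exp ((t : ℂ) * dvec k) := by
    funext k
    rw [Pi.coe_exp, ← Complex.exp_eq_exp_ℂ, Pi.smul_apply, smul_eq_mul]
    rfl
  rw [hv]

lemma matJ_mul_Eof (t : ℝ) :
    matJ * Eof t = Matrix.diagonal (fun k => dvec k * Complex.exp ((t:ℂ) * dvec k)) := by
  rw [matJ, Eof, Matrix.diagonal_mul_diagonal]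
  rfl

lemma key (mm pp qq t : ℝ) :
    localC mm pp qq * Eof t - (pp : ℂ) • (matJ * Eof t)
      = Eof t * naturalC (Complex.exp (Complex.I * (t:ℂ)) * (qq:ℂ)) mm := by
  have hc : (starRingEnd ℂ) (Complex.exp (Complex.I * (t:ℂ)) * (qq:ℂ))
      = Complex.exp (-(Complex.I * (t:ℂ))) * (qq:ℂ) := by
    rw [RingHom.map_mul, ← Complex.exp_conj]
    simp [Complex.conj_ofReal]
  ext i j
  rw [Matrix.sub_apply, Matrix.smul_apply, matJ_mul_Eof, Eof, Matrix.mul_diagonal,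
    Matrix.diagonal_mul, Matrix.diagonal_apply]
  fin_cases i <;> fin_cases j <;>
    simp [localC, naturalC, dvec, hc, smul_eq_mul, ← Complex.exp_add] <;>
    ring_nf <;>
    first
      | rfl
      | (simp [Matrix.vecHead, Matrix.vecTail]; done)
      | (simp only [mul_assoc, ← Complex.exp_add]; ring_nf)

/-- Twisting the local frame by `exp(θ𝖩)` with `θ′ = −p` yields a natural frame
satisfying the nonlocal frame equations with complex curvature `z = exp(iθ)·q`. -/
theorem local_to_natural_frame (I : Set ℝ) (hI : I.OrdConnected)
    (F' : ℝ → Matrix (Fin 3) (Fin 3) ℂ) (m p q θ : ℝ → ℝ)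
    (hFdiff : ∀ x ∈ I, ∀ i j, DifferentiableAt ℝ (fun y => F' y i j) x)
    (hθdiff : ∀ x ∈ I, DifferentiableAt ℝ θ x)
    (hF : ∀ x ∈ I, ∀ i j,
      deriv (fun y => F' y i j) x = (F' x * localC (m x) (p x) (q x)) i j)
    (hθ : ∀ x ∈ I, deriv θ x = -p x)
    (F : ℝ → Matrix (Fin 3) (Fin 3) ℂ)
    (hFdef : F = fun x => F' x * NormedSpace.exp (((θ x : ℂ)) • matJ))
    (z : ℝ → ℂ) (hz : z = fun x => Complex.exp (Complex.I * (θ x : ℂ)) * (q x : ℂ)) :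
    ∀ x ∈ I, ∀ i j,
      deriv (fun y => F y i j) x = (F x * naturalC (z x) (m x)) i j := by
  intro x hx i j
  have hFeq : (fun y => F y i j) = fun y => F' y i j * Complex.exp ((θ y : ℂ) * dvec j) := by
    funext y
    rw [hFdef]
    simp only [expJ, Eof, Matrix.mul_diagonal]
  have hθ' : HasDerivAt θ (-p x) x := by
    have := (hθdiff x hx).hasDerivAt
    rwa [hθ x hx] at this
  have hF'ij : HasDerivAt (fun y => F' y i j) ((F' x * localC (m x) (p x) (q x)) i j) x := by
    have := (hFdiff x hx i j).hasDerivAt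
    rwa [hF x hx i j] at this
  have hexp : HasDerivAt (fun y => Complex.exp ((θ y : ℂ) * dvec j))
      (Complex.exp ((θ x : ℂ) * dvec j) * (((-p x : ℝ) : ℂ) * dvec j)) x :=
    ((hθ'.ofReal_comp).mul_const (dvec j)).cexp
  have hmul := hF'ij.mul hexp
  rw [hFeq, show (fun y => F' y i j * Complex.exp ((θ y : ℂ) * dvec j)) = ((fun y => F' y i j) * fun y => Complex.exp ((θ y : ℂ) * dvec j)) from rfl, hmul.deriv]
  -- now rewrite the right-hand side using the key lemma
  have hRHS : (F x * naturalC (z x) (m x)) i j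
      = (F' x * (localC (m x) (p x) (q x) * Eof (θ x) - (p x : ℂ) • (matJ * Eof (θ x)))) i j := by
    rw [hFdef, hz]
    simp only [expJ, Matrix.mul_assoc, key]
  rw [hRHS, Matrix.mul_sub, Matrix.sub_apply, Matrix.mul_smul, Matrix.smul_apply,
    ← Matrix.mul_assoc, matJ_mul_Eof, Eof, Matrix.mul_diagonal, Matrix.mul_diagonal]
  simp only [smul_eq_mul]
  push_cast
  ring

end
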